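/- Let h : ℝ × ℝ^d → ℝ be continuously differentiable with bounded partial derivatives. Then the function f_h satisfies the Stein equation: for all x ∈ ℝ and y ∈ ℝ^d, σ² · ∂_x f_h(x,y) − x · f_h(x,y) = h(x,y) − E[h(Z,y)], where E[h(Z,y)] = ∫ h(z,y) dN(0,σ²)(z). -/

import Mathlib

open MeasureTheory ProbabilityTheory

/-- The Stein solution `f_h` associated to `h : ℝ × ℝ^d → ℝ`:
`f_h(x,y) = −(1/σ²) ∫₀¹ (2√(t(1−t)))⁻¹ ⬝ E[Z ⬝ h(√t x + √(1−t) Z, y)] dt`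
where `Z ~ N(0, σ²)`. -/
noncomputable def steinSol {d : ℕ} (σ : ℝ)
    (h : ℝ × EuclideanSpace ℝ (Fin d) → ℝ)
    (x : ℝ) (y : EuclideanSpace ℝ (Fin d)) : ℝ :=
  -(1 / σ ^ 2) * ∫ t in (0:ℝ)..1, (2 * Real.sqrt (t * (1 - t)))⁻¹ *
    ∫ z, z * h (Real.sqrt t * x + Real.sqrt (1 - t) * z, y)
      ∂(gaussianReal 0 ⟨σ ^ 2, sq_nonneg σ⟩)

open Real Set Filter NNReal



section GaussianBasics

variable {v : ℝ≥0}

lemma integral_gaussianReal_eq (hv : v ≠ 0) (f : ℝ → ℝ) :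
    ∫ z, f z ∂(gaussianReal 0 v) = ∫ z, gaussianPDFReal 0 v z * f z := by
  rw [gaussianReal_of_var_ne_zero _ hv, gaussianPDF_def]
  have : (fun z => ENNReal.ofReal (gaussianPDFReal 0 v z))
      = fun z => ((gaussianPDFReal 0 v z).toNNReal : ENNReal) := rfl
  rw [this, integral_withDensity_eq_integral_smul
    ((measurable_gaussianPDFReal 0 v).real_toNNReal) f]
  congr 1
  ext z
  rw [NNReal.smul_def, smul_eq_mul, Real.coe_toNNReal _ (gaussianPDFReal_nonneg 0 v z)]

lemma integrable_gaussianReal_iff (hv : v ≠ 0) (f : ℝ → ℝ) :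
    Integrable f (gaussianReal 0 v) ↔
      Integrable (fun z => f z * gaussianPDFReal 0 v z) volume := by
  rw [gaussianReal_of_var_ne_zero _ hv,
    integrable_withDensity_iff (measurable_gaussianPDF 0 v)
      (Filter.Eventually.of_forall fun _ => ENNReal.ofReal_lt_top)]
  simp_rw [gaussianPDF, ENNReal.toReal_ofReal (gaussianPDFReal_nonneg 0 v _)]

lemma integrable_quad_exp {b : ℝ} (hb : 0 < b) (A B : ℝ) :
    Integrable (fun z : ℝ => (A + B * z ^ 2) * Real.exp (-b * z ^ 2)) := by
  apply Integrable.mono' (g := fun z => (|A| + 2 * |B| / b) * Real.exp (-(b/2) * z ^ 2))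
    ((integrable_exp_neg_mul_sq (half_pos hb)).const_mul _)
  · exact (Continuous.mul (by continuity) (by continuity)).aestronglyMeasurable
  · refine Filter.Eventually.of_forall fun z => ?_
    have hpos : (0:ℝ) < Real.exp ((b/2) * z ^ 2) := Real.exp_pos _
    have hx : b / 2 * z ^ 2 ≤ Real.exp ((b/2) * z ^ 2) :=
      (Real.add_one_le_exp _).trans' (by linarith)
    have h2 : z ^ 2 * Real.exp (-(b/2) * z ^ 2) ≤ 2 / b := by
      rw [show -(b/2) * z ^ 2 = -((b/2) * z ^ 2) by ring, Real.exp_neg,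
        mul_inv_le_iff₀ hpos]
      rw [div_mul_eq_mul_div, le_div_iff₀ hb]
      nlinarith
    have h1 : Real.exp (-b * z ^ 2) = Real.exp (-(b/2) * z ^ 2) * Real.exp (-(b/2) * z ^ 2) := by
      rw [← Real.exp_add]; ring_nf
    have hee : Real.exp (-b * z ^ 2) ≤ Real.exp (-(b/2) * z ^ 2) :=
      Real.exp_le_exp.mpr (by nlinarith [sq_nonneg z])
    have hepos : (0:ℝ) < Real.exp (-(b/2) * z ^ 2) := Real.exp_pos _
    calc ‖(A + B * z ^ 2) * Real.exp (-b * z ^ 2)‖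
        = |A + B * z ^ 2| * Real.exp (-b * z ^ 2) := by
          rw [norm_mul, Real.norm_eq_abs, Real.norm_eq_abs, abs_of_pos (Real.exp_pos _)]
      _ ≤ (|A| + |B| * z ^ 2) * Real.exp (-b * z ^ 2) := by
          apply mul_le_mul_of_nonneg_right _ (Real.exp_pos _).le
          calc |A + B * z ^ 2| ≤ |A| + |B * z ^ 2| := abs_add_le _ _
            _ = |A| + |B| * z ^ 2 := by rw [abs_mul, abs_of_nonneg (sq_nonneg z)]
      _ = |A| * Real.exp (-b * z ^ 2)
          + |B| * ((z ^ 2 * Real.exp (-(b/2) * z ^ 2)) * Real.exp (-(b/2) * z ^ 2)) := by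
          rw [h1]; ring
      _ ≤ |A| * Real.exp (-(b/2) * z ^ 2) + |B| * (2 / b * Real.exp (-(b/2) * z ^ 2)) := by
          gcongr
      _ = (|A| + 2 * |B| / b) * Real.exp (-(b/2) * z ^ 2) := by ring

lemma integrable_gauss_quad (hv : v ≠ 0) {f : ℝ → ℝ} (hf : Continuous f) {A B : ℝ}
    (hbd : ∀ z, |f z| ≤ A + B * z ^ 2) : Integrable f (gaussianReal 0 v) := by
  rw [integrable_gaussianReal_iff hv]
  have hv0 : (0:ℝ) < (v:ℝ) := by positivity
  have hb : (0:ℝ) < 1 / (2 * (v:ℝ)) := by positivity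
  apply Integrable.mono'
    (g := fun z => (Real.sqrt (2 * Real.pi * v))⁻¹ * ((A + B * z ^ 2) * Real.exp (-(1/(2*(v:ℝ))) * z ^ 2)))
    (((integrable_quad_exp hb A B).const_mul _))
  · have hc : Continuous (gaussianPDFReal 0 v) := by
      rw [gaussianPDFReal_def]; fun_prop
    exact (hf.mul hc).aestronglyMeasurable
  · refine Filter.Eventually.of_forall fun z => ?_
    have hpdf : gaussianPDFReal 0 v z
        = (Real.sqrt (2 * Real.pi * v))⁻¹ * Real.exp (-(1/(2*(v:ℝ))) * z ^ 2) := by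
      rw [gaussianPDFReal]
      congr 1
      rw [sub_zero]
      congr 1
      field_simp
    rw [Real.norm_eq_abs, abs_mul, hpdf, abs_mul]
    have h1 : |(Real.sqrt (2 * Real.pi * ↑v))⁻¹| = (Real.sqrt (2 * Real.pi * ↑v))⁻¹ := by
      apply abs_of_nonneg; positivity
    have h2 : |Real.exp (-(1/(2*(v:ℝ))) * z ^ 2)| = Real.exp (-(1/(2*(v:ℝ))) * z ^ 2) :=
      abs_of_pos (Real.exp_pos _)
    rw [h1, h2]
    have := hbd z
    calc |f z| * ((Real.sqrt (2 * Real.pi * ↑v))⁻¹ * Real.exp (-(1/(2*(v:ℝ))) * z ^ 2))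
        ≤ (A + B * z ^ 2) * ((Real.sqrt (2 * Real.pi * ↑v))⁻¹ * Real.exp (-(1/(2*(v:ℝ))) * z ^ 2)) := by
          apply mul_le_mul_of_nonneg_right this; positivity
      _ = (Real.sqrt (2 * Real.pi * ↑v))⁻¹ * ((A + B * z ^ 2) * Real.exp (-(1/(2*(v:ℝ))) * z ^ 2)) := by ring

end GaussianBasics

section IBP

variable {v : ℝ≥0}

lemma gaussian_ibp (hv : v ≠ 0) {φ φ' : ℝ → ℝ} (hφ : ∀ z, HasDerivAt φ (φ' z) z)
    (hφ'c : Continuous φ') {C : ℝ} (hC : ∀ z, |φ' z| ≤ C) :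
    ∫ z, z * φ z ∂(gaussianReal 0 v) = (v : ℝ) * ∫ z, φ' z ∂(gaussianReal 0 v) := by
  have hv0 : (0:ℝ) < (v:ℝ) := by positivity
  have hφc : Continuous φ := by
    rw [continuous_iff_continuousAt]; exact fun z => (hφ z).continuousAt
  have hC0 : 0 ≤ C := (abs_nonneg _).trans (hC 0)
  -- linear growth of φ
  have hgrow : ∀ z : ℝ, |φ z| ≤ |φ 0| + C * |z| := by
    intro z
    have := convex_univ.norm_image_sub_le_of_norm_hasDerivWithin_le
      (f := φ) (f' := φ') (fun x _ => (hφ x).hasDerivWithinAt)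
      (fun x _ => (hC x).trans_eq' (Real.norm_eq_abs _).symm) (mem_univ 0) (mem_univ z)
    simp only [sub_zero, Real.norm_eq_abs] at this
    calc |φ z| ≤ |φ z - φ 0| + |φ 0| := by
          have := abs_sub_abs_le_abs_sub (φ z) (φ 0); linarith [abs_sub_abs_le_abs_sub (φ z) (φ 0), abs_abs (φ z)]
      _ ≤ |φ 0| + C * |z| := by linarith
  set c : ℝ := (Real.sqrt (2 * Real.pi * v))⁻¹ with hc
  set p : ℝ → ℝ := gaussianPDFReal 0 v with hpdef
  have hpeq : p = fun z => c * Real.exp (-z^2/(2*(v:ℝ))) := by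
    funext z; simp [hpdef, gaussianPDFReal, hc]
  have hpc : Continuous p := by rw [hpeq]; fun_prop
  have hp : ∀ z, HasDerivAt p (-(z/(v:ℝ)) * p z) z := by
    intro z
    rw [hpeq]
    have hq : HasDerivAt (fun z : ℝ => -z^2/(2*(v:ℝ))) (-(z/(v:ℝ))) z := by
      have := ((hasDerivAt_pow 2 z).neg).div_const (2*(v:ℝ))
      refine this.congr_deriv ?_
      field_simp
      ring
    have := (hq.exp).const_mul c
    refine this.congr_deriv ?_
    beta_reduce
    ring
  -- integration by parts
  have hw : ∀ z : ℝ, HasDerivAt (fun z => -(v:ℝ) * p z) (z * p z) z := by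
    intro z
    have := (hp z).const_mul (-(v:ℝ))
    refine this.congr_deriv ?_
    field_simp
  have key := MeasureTheory.integral_mul_deriv_eq_deriv_mul_of_integrable
    (u := φ) (v := fun z => -(v:ℝ) * p z) (u' := φ') (v' := fun z => z * p z)
    (fun z _ => hφ z) (fun z _ => hw z) ?_ ?_ ?_
  · -- conclude
    rw [integral_gaussianReal_eq hv, integral_gaussianReal_eq hv]
    have l1 : ∫ z, p z * (z * φ z) = ∫ z, φ z * (z * p z) := by
      congr 1; funext z; ring
    have l2 : ∫ z, φ' z * (-(v:ℝ) * p z) = -(v:ℝ) * ∫ z, p z * φ' z := by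
      rw [← integral_const_mul]
      congr 1; funext z; ring
    rw [l1, key, l2]
    ring
  · -- Integrable (φ * (z p z))
    have : Integrable (fun z => z * φ z) (gaussianReal 0 v) := by
      apply integrable_gauss_quad hv (by fun_prop)
        (A := |φ 0| / 2 + C / 2) (B := |φ 0| / 2 + C / 2 + C)
      intro z
      have h1 : |z * φ z| ≤ |z| * (|φ 0| + C * |z|) := by
        rw [abs_mul]
        exact mul_le_mul_of_nonneg_left (hgrow z) (abs_nonneg z)
      have h2 : |z| ≤ (1 + z^2)/2 := by nlinarith [sq_nonneg (|z| - 1), sq_abs z, abs_nonneg z]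
      nlinarith [abs_nonneg z, abs_nonneg (φ 0), sq_abs z, sq_nonneg z, abs_nonneg (z * φ z)]
    have := (integrable_gaussianReal_iff hv _).1 this
    apply this.congr
    filter_upwards with z
    show z * φ z * p z = (φ * fun z => z * p z) z
    simp only [Pi.mul_apply]
    ring
  · -- Integrable (φ' * (-(v) p z))
    have : Integrable (fun z => -(v:ℝ) * φ' z) (gaussianReal 0 v) := by
      apply integrable_gauss_quad hv (by fun_prop) (A := (v:ℝ) * C) (B := 0)
      intro z
      rw [abs_mul, abs_neg]
      calc |(v:ℝ)| * |φ' z| ≤ (v:ℝ) * C := by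
            rw [abs_of_nonneg hv0.le]
            exact mul_le_mul_of_nonneg_left (hC z) hv0.le
        _ = (v:ℝ) * C + 0 * z^2 := by ring
    have := (integrable_gaussianReal_iff hv _).1 this
    apply this.congr
    filter_upwards with z
    show -(v:ℝ) * φ' z * p z = (φ' * fun z => -(v:ℝ) * p z) z
    simp only [Pi.mul_apply]
    ring
  · -- Integrable (φ * (-(v) p z))
    have : Integrable (fun z => -(v:ℝ) * φ z) (gaussianReal 0 v) := by
      apply integrable_gauss_quad hv (by fun_prop)
        (A := (v:ℝ) * (|φ 0| + C / 2)) (B := (v:ℝ) * (C / 2))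
      intro z
      rw [abs_mul, abs_neg, abs_of_nonneg hv0.le]
      have h2 : |z| ≤ (1 + z^2)/2 := by nlinarith [sq_nonneg (|z| - 1), sq_abs z, abs_nonneg z]
      have h3 := hgrow z
      calc (v:ℝ) * |φ z| ≤ (v:ℝ) * (|φ 0| + C * ((1 + z^2)/2)) := by
            apply mul_le_mul_of_nonneg_left _ hv0.le
            nlinarith
        _ = (v:ℝ) * (|φ 0| + C / 2) + (v:ℝ) * (C / 2) * z ^ 2 := by ring
    have := (integrable_gaussianReal_iff hv _).1 this
    apply this.congr
    filter_upwards with z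
    show -(v:ℝ) * φ z * p z = (φ * fun z => -(v:ℝ) * p z) z
    simp only [Pi.mul_apply]
    ring

end IBP

section Chain

variable {d : ℕ}

/-- first partial derivative of h -/
noncomputable def Dh (h : ℝ × EuclideanSpace ℝ (Fin d) → ℝ) (y : EuclideanSpace ℝ (Fin d))
    (u : ℝ) : ℝ := fderiv ℝ h (u, y) (1, 0)

variable {h : ℝ × EuclideanSpace ℝ (Fin d) → ℝ} {y : EuclideanSpace ℝ (Fin d)} {C : ℝ}

lemma norm_one_zero : ‖((1 : ℝ), (0 : EuclideanSpace ℝ (Fin d)))‖ = 1 := by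
  rw [Prod.norm_def]
  simp

lemma Dh_cont (hh : ContDiff ℝ 1 h) : Continuous (Dh h y) := by
  have h1 : Continuous (fderiv ℝ h) := hh.continuous_fderiv one_ne_zero
  have h2 : Continuous fun u : ℝ => (u, y) := by fun_prop
  exact (h1.comp h2).clm_apply continuous_const

lemma Dh_bound (hC : ∀ p, ‖fderiv ℝ h p‖ ≤ C) (u : ℝ) : |Dh h y u| ≤ C := by
  calc |Dh h y u| ≤ ‖fderiv ℝ h (u, y)‖ * ‖((1:ℝ), (0 : EuclideanSpace ℝ (Fin d)))‖ :=
        (fderiv ℝ h (u, y)).le_opNorm _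
    _ ≤ C := by rw [norm_one_zero, mul_one]; exact hC _

lemma hasDerivAt_affine_comp (hh : ContDiff ℝ 1 h) (a b z : ℝ) :
    HasDerivAt (fun z => h (a + b * z, y)) (b * Dh h y (a + b * z)) z := by
  have hL : HasDerivAt (fun z : ℝ => (a + b * z, y))
      ((b, 0) : ℝ × EuclideanSpace ℝ (Fin d)) z := by
    have := (((hasDerivAt_id z).const_mul b).const_add a).prodMk (hasDerivAt_const z y)
    simpa using this
  have hd : HasFDerivAt h (fderiv ℝ h (a + b * z, y)) (a + b * z, y) :=
    (hh.differentiable one_ne_zero _).hasFDerivAt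
  have := hd.comp_hasDerivAt z hL
  refine this.congr_deriv ?_
  have : ((b, 0) : ℝ × EuclideanSpace ℝ (Fin d)) = b • (1, 0) := by
    simp [Prod.smul_mk]
  rw [this, (fderiv ℝ h (a + b * z, y)).map_smul]
  simp [Dh, smul_eq_mul]

lemma h_growth (hh : ContDiff ℝ 1 h) (hC : ∀ p, ‖fderiv ℝ h p‖ ≤ C) (u v : ℝ) :
    |h (u, y) - h (v, y)| ≤ C * |u - v| := by
  have := convex_univ.norm_image_sub_le_of_norm_fderiv_le
    (f := h) (fun p _ => hh.differentiable one_ne_zero p)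
    (fun p _ => hC p) (mem_univ (v, y)) (mem_univ (u, y))
  have hnorm : ‖((u, y) : ℝ × EuclideanSpace ℝ (Fin d)) - (v, y)‖ = |u - v| := by
    rw [Prod.sub_def, Prod.norm_def]
    simp
  rw [hnorm] at this
  exact this.trans_eq' (by rw [Real.norm_eq_abs])

end Chain

section Main

variable {d : ℕ}

noncomputable def gmeas (σ : ℝ) : Measure ℝ := gaussianReal 0 ⟨σ^2, sq_nonneg σ⟩

noncomputable def Ifun (σ : ℝ) (h : ℝ × EuclideanSpace ℝ (Fin d) → ℝ)
    (y : EuclideanSpace ℝ (Fin d)) (t ξ : ℝ) : ℝ :=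
  ∫ z, z * h (Real.sqrt t * ξ + Real.sqrt (1 - t) * z, y) ∂(gmeas σ)

noncomputable def Jfun (σ : ℝ) (h : ℝ × EuclideanSpace ℝ (Fin d) → ℝ)
    (y : EuclideanSpace ℝ (Fin d)) (t ξ : ℝ) : ℝ :=
  ∫ z, Dh h y (Real.sqrt t * ξ + Real.sqrt (1 - t) * z) ∂(gmeas σ)

noncomputable def JZfun (σ : ℝ) (h : ℝ × EuclideanSpace ℝ (Fin d) → ℝ)
    (y : EuclideanSpace ℝ (Fin d)) (t ξ : ℝ) : ℝ :=
  ∫ z, z * Dh h y (Real.sqrt t * ξ + Real.sqrt (1 - t) * z) ∂(gmeas σ)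

noncomputable def Gfun (σ : ℝ) (h : ℝ × EuclideanSpace ℝ (Fin d) → ℝ)
    (y : EuclideanSpace ℝ (Fin d)) (x t : ℝ) : ℝ :=
  ∫ z, h (Real.sqrt t * x + Real.sqrt (1 - t) * z, y) ∂(gmeas σ)

variable {σ : ℝ} {h : ℝ × EuclideanSpace ℝ (Fin d) → ℝ} {y : EuclideanSpace ℝ (Fin d)} {C : ℝ}

lemma hv_ne (hσ : 0 < σ) : (⟨σ^2, sq_nonneg σ⟩ : ℝ≥0) ≠ 0 := by
  intro h0
  have : (σ:ℝ)^2 = 0 := congrArg NNReal.toReal h0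
  nlinarith

instance gmeas_prob (σ : ℝ) : IsProbabilityMeasure (gmeas σ) := by
  unfold gmeas; exact instIsProbabilityMeasureGaussianReal 0 _

lemma gmeas_eq (σ : ℝ) : gmeas σ = gaussianReal 0 ⟨σ^2, sq_nonneg σ⟩ := rfl

lemma steinSol_eq (σ : ℝ) (h : ℝ × EuclideanSpace ℝ (Fin d) → ℝ) (y : EuclideanSpace ℝ (Fin d))
    (ξ : ℝ) : steinSol σ h ξ y
      = -(1 / σ ^ 2) * ∫ t in (0:ℝ)..1, (2 * Real.sqrt (t * (1 - t)))⁻¹ * Ifun σ h y t ξ := rfl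

lemma integrable_abs_gmeas (hσ : 0 < σ) : Integrable (fun z : ℝ => |z|) (gmeas σ) := by
  apply integrable_gauss_quad (hv_ne hσ) continuous_abs (A := 1/2) (B := 1/2)
  intro z
  rw [abs_abs]
  nlinarith [sq_nonneg (|z| - 1), sq_abs z, abs_nonneg z]

lemma integrable_h_comp (hσ : 0 < σ) (hh : ContDiff ℝ 1 h) (hC : ∀ p, ‖fderiv ℝ h p‖ ≤ C)
    (a b : ℝ) : Integrable (fun z => h (a + b * z, y)) (gmeas σ) := by
  have hC0 : (0:ℝ) ≤ C := le_trans (norm_nonneg _) (hC (0, y))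
  apply integrable_gauss_quad (hv_ne hσ) (by
      have := (hasDerivAt_affine_comp (y := y) hh a b)
      exact continuous_iff_continuousAt.2 fun z => ((this z).continuousAt))
    (A := |h (0, y)| + C * |a| + C * |b| / 2) (B := C * |b| / 2)
  intro z
  have hg := h_growth (y := y) hh hC (a + b * z) 0
  rw [sub_zero] at hg
  have habs : |h (a + b*z, y)| ≤ |h (0,y)| + C * |a + b * z| := by
    have := abs_sub_abs_le_abs_sub (h (a + b*z, y)) (h (0, y))
    linarith
  have h1 : |a + b * z| ≤ |a| + |b| * |z| := by
    calc |a + b * z| ≤ |a| + |b * z| := abs_add_le _ _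
      _ = |a| + |b| * |z| := by rw [abs_mul]
  have h2 : |z| ≤ (1 + z^2)/2 := by nlinarith [sq_nonneg (|z| - 1), sq_abs z, abs_nonneg z]
  have h3 : |b| * |z| ≤ |b| * ((1 + z^2)/2) :=
    mul_le_mul_of_nonneg_left h2 (abs_nonneg b)
  have h4 : C * |a + b * z| ≤ C * (|a| + |b| * ((1 + z^2)/2)) :=
    mul_le_mul_of_nonneg_left (h1.trans (by linarith)) hC0
  nlinarith [abs_nonneg b, sq_nonneg z]

lemma integrable_zh_comp (hσ : 0 < σ) (hh : ContDiff ℝ 1 h) (hC : ∀ p, ‖fderiv ℝ h p‖ ≤ C)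
    (a b : ℝ) : Integrable (fun z => z * h (a + b * z, y)) (gmeas σ) := by
  have hC0 : (0:ℝ) ≤ C := le_trans (norm_nonneg _) (hC (0, y))
  set A0 := |h (0, y)| + C * |a| with hA0
  have hA0nn : 0 ≤ A0 := by positivity
  apply integrable_gauss_quad (hv_ne hσ) (by
      have := (hasDerivAt_affine_comp (y := y) hh a b)
      exact continuous_id.mul (continuous_iff_continuousAt.2 fun z => ((this z).continuousAt)))
    (A := A0 / 2) (B := A0 / 2 + C * |b|)
  intro z
  have hg := h_growth (y := y) hh hC (a + b * z) 0
  rw [sub_zero] at hg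
  have habs : |h (a + b*z, y)| ≤ A0 + C * |b| * |z| := by
    have h4 := abs_sub_abs_le_abs_sub (h (a + b*z, y)) (h (0, y))
    have h1 : |a + b * z| ≤ |a| + |b| * |z| := by
      calc |a + b * z| ≤ |a| + |b * z| := abs_add_le _ _
        _ = |a| + |b| * |z| := by rw [abs_mul]
    have := mul_le_mul_of_nonneg_left h1 hC0
    rw [hA0]
    nlinarith
  have h2 : |z| ≤ (1 + z^2)/2 := by nlinarith [sq_nonneg (|z| - 1), sq_abs z, abs_nonneg z]
  rw [abs_mul]
  calc |z| * |h (a + b * z, y)| ≤ |z| * (A0 + C * |b| * |z|) :=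
        mul_le_mul_of_nonneg_left habs (abs_nonneg z)
    _ = A0 * |z| + C * |b| * (|z| * |z|) := by ring
    _ ≤ A0 * ((1 + z^2)/2) + C * |b| * z^2 := by
        have : |z| * |z| = z ^ 2 := by rw [← abs_mul, abs_of_nonneg (mul_self_nonneg z)]; ring
        rw [this]
        gcongr
    _ = A0 / 2 + (A0 / 2 + C * |b|) * z^2 := by ring

lemma integrable_Dh_comp (hσ : 0 < σ) (hh : ContDiff ℝ 1 h) (hC : ∀ p, ‖fderiv ℝ h p‖ ≤ C)
    (a b : ℝ) : Integrable (fun z => Dh h y (a + b * z)) (gmeas σ) := by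
  apply integrable_gauss_quad (hv_ne hσ)
    ((Dh_cont hh).comp (by fun_prop)) (A := C) (B := 0)
  intro z
  simp only [Function.comp_apply]
  have := Dh_bound (y := y) hC (a + b * z)
  nlinarith [sq_nonneg z]

lemma integrable_zDh_comp (hσ : 0 < σ) (hh : ContDiff ℝ 1 h) (hC : ∀ p, ‖fderiv ℝ h p‖ ≤ C)
    (a b : ℝ) : Integrable (fun z => z * Dh h y (a + b * z)) (gmeas σ) := by
  have hC0 : (0:ℝ) ≤ C := le_trans (norm_nonneg _) (hC (0, y))
  apply integrable_gauss_quad (hv_ne hσ)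
    (continuous_id.mul ((Dh_cont hh).comp (by fun_prop))) (A := C / 2) (B := C / 2)
  intro z
  simp only [Pi.mul_apply, Function.comp_apply, id_eq]
  have hd := Dh_bound (y := y) hC (a + b * z)
  have h2 : |z| ≤ (1 + z^2)/2 := by nlinarith [sq_nonneg (|z| - 1), sq_abs z, abs_nonneg z]
  rw [abs_mul]
  nlinarith [abs_nonneg z, abs_nonneg (Dh h y (a + b * z)),
    mul_le_mul_of_nonneg_left hd (abs_nonneg z)]

end Main

section Main2

variable {d : ℕ} {σ : ℝ} {h : ℝ × EuclideanSpace ℝ (Fin d) → ℝ} {y : EuclideanSpace ℝ (Fin d)} {C : ℝ}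

lemma hasDerivAt_affine_comp' (hh : ContDiff ℝ 1 h) (a b w : ℝ) :
    HasDerivAt (fun w => h (b * w + a, y)) (b * Dh h y (b * w + a)) w := by
  have := hasDerivAt_affine_comp (y := y) hh a b w
  simpa [add_comm] using this

lemma Ifun_eq_ibp (hσ : 0 < σ) (hh : ContDiff ℝ 1 h) (hC : ∀ p, ‖fderiv ℝ h p‖ ≤ C)
    (t ξ : ℝ) : Ifun σ h y t ξ = σ^2 * (Real.sqrt (1 - t) * Jfun σ h y t ξ) := by
  have hC0 : (0:ℝ) ≤ C := le_trans (norm_nonneg _) (hC (0, y))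
  have key := gaussian_ibp (hv_ne hσ)
    (φ := fun z => h (Real.sqrt t * ξ + Real.sqrt (1 - t) * z, y))
    (φ' := fun z => Real.sqrt (1 - t) * Dh h y (Real.sqrt t * ξ + Real.sqrt (1 - t) * z))
    (fun z => hasDerivAt_affine_comp hh _ _ z)
    (continuous_const.mul ((Dh_cont hh).comp (by fun_prop)))
    (C := Real.sqrt (1 - t) * C) ?_
  · rw [Ifun, gmeas_eq, key]
    congr 1
    rw [Jfun, gmeas_eq, ← integral_const_mul]
  · intro z
    rw [abs_mul, abs_of_nonneg (Real.sqrt_nonneg _)]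
    exact mul_le_mul_of_nonneg_left (Dh_bound hC _) (Real.sqrt_nonneg _)

lemma hasDerivAt_Ifun (hσ : 0 < σ) (hh : ContDiff ℝ 1 h) (hC : ∀ p, ‖fderiv ℝ h p‖ ≤ C)
    (t ξ : ℝ) :
    HasDerivAt (fun ξ => Ifun σ h y t ξ) (Real.sqrt t * JZfun σ h y t ξ) ξ := by
  have hC0 : (0:ℝ) ≤ C := le_trans (norm_nonneg _) (hC (0, y))
  have main := hasDerivAt_integral_of_dominated_loc_of_deriv_le
    (μ := gmeas σ) (x₀ := ξ)
    (F := fun ξ z => z * h (Real.sqrt t * ξ + Real.sqrt (1 - t) * z, y))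
    (F' := fun ξ z => Real.sqrt t * (z * Dh h y (Real.sqrt t * ξ + Real.sqrt (1 - t) * z)))
    (bound := fun z => Real.sqrt t * C * |z|)
    (Metric.ball_mem_nhds _ one_pos)
    (Filter.Eventually.of_forall fun ξ' =>
      (integrable_zh_comp hσ hh hC (Real.sqrt t * ξ') (Real.sqrt (1 - t))).aestronglyMeasurable)
    (integrable_zh_comp hσ hh hC (Real.sqrt t * ξ) (Real.sqrt (1 - t)))
    (((integrable_zDh_comp hσ hh hC (Real.sqrt t * ξ) (Real.sqrt (1 - t))).const_mul
      (Real.sqrt t)).aestronglyMeasurable)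
    (Filter.Eventually.of_forall fun z => fun ξ' _ => ?_)
    (((integrable_abs_gmeas hσ).const_mul (Real.sqrt t * C)))
    (Filter.Eventually.of_forall fun z => fun ξ' _ => ?_)
  · have := main.2
    rw [JZfun, gmeas_eq, ← integral_const_mul]
    exact this
  · -- bound
    rw [Real.norm_eq_abs, abs_mul, abs_mul, abs_of_nonneg (Real.sqrt_nonneg t)]
    have := Dh_bound (y := y) hC (Real.sqrt t * ξ' + Real.sqrt (1 - t) * z)
    calc Real.sqrt t * (|z| * |Dh h y (Real.sqrt t * ξ' + Real.sqrt (1 - t) * z)|)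
        ≤ Real.sqrt t * (|z| * C) := by
          apply mul_le_mul_of_nonneg_left _ (Real.sqrt_nonneg t)
          exact mul_le_mul_of_nonneg_left this (abs_nonneg z)
      _ = Real.sqrt t * C * |z| := by ring
  · -- HasDerivAt in ξ'
    have base := (hasDerivAt_affine_comp' (y := y) hh (Real.sqrt (1 - t) * z) (Real.sqrt t)
      ξ').const_mul z
    refine base.congr_deriv ?_
    ring
end Main2

section Main3

variable {d : ℕ} {σ : ℝ} {h : ℝ × EuclideanSpace ℝ (Fin d) → ℝ} {y : EuclideanSpace ℝ (Fin d)} {C : ℝ}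

lemma cont_inner (ξ z : ℝ) :
    Continuous fun t : ℝ => ((Real.sqrt t * ξ + Real.sqrt (1 - t) * z, y) :
      ℝ × EuclideanSpace ℝ (Fin d)) :=
  ((Real.continuous_sqrt.mul continuous_const).add
    ((Real.continuous_sqrt.comp (continuous_const.sub continuous_id)).mul
      continuous_const)).prodMk continuous_const

lemma bound_h_Icc (hh : ContDiff ℝ 1 h) (hC : ∀ p, ‖fderiv ℝ h p‖ ≤ C) {t : ℝ}
    (ht : t ∈ Icc (0:ℝ) 1) (ξ z : ℝ) :
    |h (Real.sqrt t * ξ + Real.sqrt (1 - t) * z, y)| ≤ |h (0, y)| + C * (|ξ| + |z|) := by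
  have hC0 : (0:ℝ) ≤ C := le_trans (norm_nonneg _) (hC (0, y))
  have hg := h_growth (y := y) hh hC (Real.sqrt t * ξ + Real.sqrt (1 - t) * z) 0
  rw [sub_zero] at hg
  have h4 := abs_sub_abs_le_abs_sub (h (Real.sqrt t * ξ + Real.sqrt (1 - t) * z, y)) (h (0, y))
  have hs1 : Real.sqrt t ≤ 1 := by
    have := Real.sqrt_le_sqrt ht.2
    simpa using this
  have hs2 : Real.sqrt (1 - t) ≤ 1 := by
    have : (1 - t : ℝ) ≤ 1 := by linarith [ht.1]
    have := Real.sqrt_le_sqrt this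
    simpa using this
  have habs : |Real.sqrt t * ξ + Real.sqrt (1 - t) * z| ≤ |ξ| + |z| := by
    calc |Real.sqrt t * ξ + Real.sqrt (1 - t) * z|
        ≤ |Real.sqrt t * ξ| + |Real.sqrt (1 - t) * z| := abs_add_le _ _
      _ = Real.sqrt t * |ξ| + Real.sqrt (1 - t) * |z| := by
          rw [abs_mul, abs_mul, abs_of_nonneg (Real.sqrt_nonneg _),
            abs_of_nonneg (Real.sqrt_nonneg _)]
      _ ≤ |ξ| + |z| := by
          nlinarith [mul_le_mul_of_nonneg_right hs1 (abs_nonneg ξ),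
            mul_le_mul_of_nonneg_right hs2 (abs_nonneg z)]
  linarith [mul_le_mul_of_nonneg_left habs hC0]

lemma contOn_Ifun (hσ : 0 < σ) (hh : ContDiff ℝ 1 h) (hC : ∀ p, ‖fderiv ℝ h p‖ ≤ C) (ξ : ℝ) :
    ContinuousOn (fun t => Ifun σ h y t ξ) (Icc (0:ℝ) 1) := by
  have hC0 : (0:ℝ) ≤ C := le_trans (norm_nonneg _) (hC (0, y))
  set A0 := |h (0, y)| with hA0
  apply continuousOn_of_dominated (bound := fun z => |z| * (A0 + C * (|ξ| + |z|)))
  · exact fun t _ =>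
      (integrable_zh_comp hσ hh hC (Real.sqrt t * ξ) (Real.sqrt (1 - t))).aestronglyMeasurable
  · intro t ht
    filter_upwards with z
    rw [Real.norm_eq_abs, abs_mul]
    have := bound_h_Icc (y := y) hh hC ht ξ z
    apply mul_le_mul_of_nonneg_left this (abs_nonneg z)
  · apply integrable_gauss_quad (hv_ne hσ) (by fun_prop)
      (A := (A0 + C * |ξ|)/2) (B := (A0 + C * |ξ|)/2 + C)
    intro z
    have h2 : |z| ≤ (1 + z^2)/2 := by nlinarith [sq_nonneg (|z| - 1), sq_abs z, abs_nonneg z]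
    have hzz : |z| * |z| = z^2 := by rw [← abs_mul, abs_of_nonneg (mul_self_nonneg z)]; ring
    have hA0nn : 0 ≤ A0 := abs_nonneg _
    rw [abs_of_nonneg (by positivity)]
    nlinarith [mul_le_mul_of_nonneg_left h2 (by positivity : (0:ℝ) ≤ A0 + C * |ξ|),
      hzz, abs_nonneg z, sq_nonneg z]
  · filter_upwards with z
    exact (continuous_const.mul (hh.continuous.comp (cont_inner ξ z))).continuousOn

lemma contOn_JZfun (hσ : 0 < σ) (hh : ContDiff ℝ 1 h) (hC : ∀ p, ‖fderiv ℝ h p‖ ≤ C) (ξ : ℝ) :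
    ContinuousOn (fun t => JZfun σ h y t ξ) (Icc (0:ℝ) 1) := by
  apply continuousOn_of_dominated (bound := fun z => C * |z|)
  · exact fun t _ =>
      (integrable_zDh_comp hσ hh hC (Real.sqrt t * ξ) (Real.sqrt (1 - t))).aestronglyMeasurable
  · intro t ht
    filter_upwards with z
    rw [Real.norm_eq_abs, abs_mul]
    calc |z| * |Dh h y (Real.sqrt t * ξ + Real.sqrt (1 - t) * z)| ≤ |z| * C :=
          mul_le_mul_of_nonneg_left (Dh_bound hC _) (abs_nonneg z)
      _ = C * |z| := by ring
  · exact (integrable_abs_gmeas hσ).const_mul C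
  · filter_upwards with z
    exact (continuous_const.mul ((Dh_cont hh).comp
      (((Real.continuous_sqrt.mul continuous_const).add
        ((Real.continuous_sqrt.comp (continuous_const.sub continuous_id)).mul
          continuous_const))))).continuousOn

lemma contOn_Gfun (hσ : 0 < σ) (hh : ContDiff ℝ 1 h) (hC : ∀ p, ‖fderiv ℝ h p‖ ≤ C) (x : ℝ) :
    ContinuousOn (fun t => Gfun σ h y x t) (Icc (0:ℝ) 1) := by
  have hC0 : (0:ℝ) ≤ C := le_trans (norm_nonneg _) (hC (0, y))
  set A0 := |h (0, y)| with hA0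
  apply continuousOn_of_dominated (bound := fun z => A0 + C * (|x| + |z|))
  · exact fun t _ =>
      (integrable_h_comp hσ hh hC (Real.sqrt t * x) (Real.sqrt (1 - t))).aestronglyMeasurable
  · intro t ht
    filter_upwards with z
    rw [Real.norm_eq_abs]
    exact bound_h_Icc (y := y) hh hC ht x z
  · apply integrable_gauss_quad (hv_ne hσ) (by fun_prop)
      (A := A0 + C * |x| + C/2) (B := C/2)
    intro z
    have h2 : |z| ≤ (1 + z^2)/2 := by nlinarith [sq_nonneg (|z| - 1), sq_abs z, abs_nonneg z]
    have hA0nn : 0 ≤ A0 := abs_nonneg _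
    rw [abs_of_nonneg (by positivity)]
    nlinarith [abs_nonneg z, abs_nonneg x]
  · filter_upwards with z
    exact (hh.continuous.comp (cont_inner x z)).continuousOn

lemma hasDerivAt_h_comp (hh : ContDiff ℝ 1 h) {g : ℝ → ℝ} {g' t : ℝ}
    (hg : HasDerivAt g g' t) :
    HasDerivAt (fun s => h (g s, y)) (g' * Dh h y (g t)) t := by
  have hL : HasDerivAt (fun s : ℝ => ((g s, y) : ℝ × EuclideanSpace ℝ (Fin d)))
      ((g', 0) : ℝ × EuclideanSpace ℝ (Fin d)) t := hg.prodMk (hasDerivAt_const t y)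
  have hd : HasFDerivAt h (fderiv ℝ h (g t, y)) (g t, y) :=
    (hh.differentiable one_ne_zero _).hasFDerivAt
  have := hd.comp_hasDerivAt t hL
  refine this.congr_deriv ?_
  have hsm : ((g', 0) : ℝ × EuclideanSpace ℝ (Fin d)) = g' • (1, 0) := by
    simp [Prod.smul_mk]
  rw [hsm, (fderiv ℝ h (g t, y)).map_smul]
  simp [Dh, smul_eq_mul]

lemma hasDerivAt_Gfun (hσ : 0 < σ) (hh : ContDiff ℝ 1 h) (hC : ∀ p, ‖fderiv ℝ h p‖ ≤ C)
    (x : ℝ) {t : ℝ} (ht : t ∈ Ioo (0:ℝ) 1) :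
    HasDerivAt (fun t => Gfun σ h y x t)
      (x / (2 * Real.sqrt t) * Jfun σ h y t x
        - 1 / (2 * Real.sqrt (1 - t)) * JZfun σ h y t x) t := by
  have hC0 : (0:ℝ) ≤ C := le_trans (norm_nonneg _) (hC (0, y))
  obtain ⟨ht0, ht1⟩ := ht
  have hhalf0 : (0:ℝ) < t/2 := by linarith
  have hhalf1 : (0:ℝ) < (1-t)/2 := by linarith
  set ε : ℝ := min (t/2) ((1-t)/2) with hε
  have hεpos : 0 < ε := lt_min hhalf0 hhalf1
  have hball : ∀ s ∈ Metric.ball t ε, t/2 ≤ s ∧ (1-t)/2 ≤ 1 - s := by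
    intro s hs
    rw [Metric.mem_ball, Real.dist_eq] at hs
    have h1 := abs_lt.1 hs
    constructor
    · have := min_le_left (t/2) ((1-t)/2); linarith [h1.1]
    · have := min_le_right (t/2) ((1-t)/2); linarith [h1.2]
  have main := hasDerivAt_integral_of_dominated_loc_of_deriv_le
    (μ := gmeas σ) (x₀ := t)
    (F := fun s z => h (Real.sqrt s * x + Real.sqrt (1 - s) * z, y))
    (F' := fun s z => (x / (2 * Real.sqrt s) - z / (2 * Real.sqrt (1 - s)))
      * Dh h y (Real.sqrt s * x + Real.sqrt (1 - s) * z))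
    (bound := fun z => C * (|x| / (2 * Real.sqrt (t/2)))
      + C / (2 * Real.sqrt ((1-t)/2)) * |z|)
    (Metric.ball_mem_nhds _ hεpos)
    (Filter.Eventually.of_forall fun s =>
      (integrable_h_comp hσ hh hC (Real.sqrt s * x) (Real.sqrt (1 - s))).aestronglyMeasurable)
    (integrable_h_comp hσ hh hC (Real.sqrt t * x) (Real.sqrt (1 - t)))
    ?_ ?_
    ((integrable_const _).add ((integrable_abs_gmeas hσ).const_mul _))
    ?_
  · have hval := main.2
    have heq : (∫ z, (x / (2 * Real.sqrt t) - z / (2 * Real.sqrt (1 - t)))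
        * Dh h y (Real.sqrt t * x + Real.sqrt (1 - t) * z) ∂(gmeas σ))
        = x / (2 * Real.sqrt t) * Jfun σ h y t x
          - 1 / (2 * Real.sqrt (1 - t)) * JZfun σ h y t x := by
      have hint1 := (integrable_Dh_comp (y := y) hσ hh hC (Real.sqrt t * x)
        (Real.sqrt (1 - t))).const_mul (x / (2 * Real.sqrt t))
      have hint2 := (integrable_zDh_comp (y := y) hσ hh hC (Real.sqrt t * x)
        (Real.sqrt (1 - t))).const_mul (1 / (2 * Real.sqrt (1 - t)))
      rw [show (fun z => (x / (2 * Real.sqrt t) - z / (2 * Real.sqrt (1 - t)))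
          * Dh h y (Real.sqrt t * x + Real.sqrt (1 - t) * z))
          = (fun z => (x / (2 * Real.sqrt t))
              * Dh h y (Real.sqrt t * x + Real.sqrt (1 - t) * z)
            - (1 / (2 * Real.sqrt (1 - t)))
              * (z * Dh h y (Real.sqrt t * x + Real.sqrt (1 - t) * z))) by
        funext z; ring]
      rw [integral_sub hint1 hint2, integral_const_mul, integral_const_mul]
      rw [Jfun, JZfun, gmeas_eq]
    rw [← heq]
    exact hval
  · -- hF'_meas
    apply Continuous.aestronglyMeasurable
    apply Continuous.mul
    · fun_prop
    · exact (Dh_cont hh).comp (continuous_const.add (continuous_const.mul continuous_id))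
  · -- bound
    filter_upwards with z
    intro s hs
    obtain ⟨hs0, hs1⟩ := hball s hs
    have hsq0 : Real.sqrt (t/2) ≤ Real.sqrt s := Real.sqrt_le_sqrt hs0
    have hsq1 : Real.sqrt ((1-t)/2) ≤ Real.sqrt (1 - s) := Real.sqrt_le_sqrt hs1
    have hpos0 : (0:ℝ) < Real.sqrt (t/2) := Real.sqrt_pos.2 hhalf0
    have hpos1 : (0:ℝ) < Real.sqrt ((1-t)/2) := Real.sqrt_pos.2 hhalf1
    rw [Real.norm_eq_abs, abs_mul]
    have hd := Dh_bound (y := y) hC (Real.sqrt s * x + Real.sqrt (1 - s) * z)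
    have habs : |x / (2 * Real.sqrt s) - z / (2 * Real.sqrt (1 - s))|
        ≤ |x| / (2 * Real.sqrt (t/2)) + |z| / (2 * Real.sqrt ((1-t)/2)) := by
      calc |x / (2 * Real.sqrt s) - z / (2 * Real.sqrt (1 - s))|
          ≤ |x / (2 * Real.sqrt s)| + |z / (2 * Real.sqrt (1 - s))| := abs_sub _ _
        _ = |x| / (2 * Real.sqrt s) + |z| / (2 * Real.sqrt (1 - s)) := by
            rw [abs_div, abs_div, abs_of_nonneg (by positivity : (0:ℝ) ≤ 2 * Real.sqrt s),
              abs_of_nonneg (by positivity : (0:ℝ) ≤ 2 * Real.sqrt (1 - s))]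
        _ ≤ |x| / (2 * Real.sqrt (t/2)) + |z| / (2 * Real.sqrt ((1-t)/2)) := by
            gcongr <;> linarith
    calc |x / (2 * Real.sqrt s) - z / (2 * Real.sqrt (1 - s))|
          * |Dh h y (Real.sqrt s * x + Real.sqrt (1 - s) * z)|
        ≤ (|x| / (2 * Real.sqrt (t/2)) + |z| / (2 * Real.sqrt ((1-t)/2))) * C := by
          apply mul_le_mul habs hd (abs_nonneg _)
          positivity
      _ = C * (|x| / (2 * Real.sqrt (t/2))) + C / (2 * Real.sqrt ((1-t)/2)) * |z| := by
          ring
  · -- h_diff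
    filter_upwards with z
    intro s hs
    obtain ⟨hs0, hs1⟩ := hball s hs
    have hs0' : (0:ℝ) < s := lt_of_lt_of_le hhalf0 hs0
    have hs1' : (0:ℝ) < 1 - s := lt_of_lt_of_le hhalf1 hs1
    have hg : HasDerivAt (fun s : ℝ => Real.sqrt s * x + Real.sqrt (1 - s) * z)
        (x / (2 * Real.sqrt s) - z / (2 * Real.sqrt (1 - s))) s := by
      have h1 : HasDerivAt (fun s : ℝ => Real.sqrt s * x) (1 / (2 * Real.sqrt s) * x) s :=
        (Real.hasDerivAt_sqrt hs0'.ne').mul_const x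
      have hinner : HasDerivAt (fun s : ℝ => 1 - s) (-1) s := by
        simpa using ((hasDerivAt_id s).const_sub 1)
      have h2 : HasDerivAt (fun s : ℝ => Real.sqrt (1 - s))
          (1 / (2 * Real.sqrt (1 - s)) * (-1)) s :=
        (Real.hasDerivAt_sqrt hs1'.ne').comp s hinner
      have h3 := (h2.mul_const z)
      have := h1.add h3
      refine this.congr_deriv ?_
      ring
    have := hasDerivAt_h_comp (y := y) hh hg
    exact this
end Main3

section Main4

variable {d : ℕ} {σ : ℝ} {h : ℝ × EuclideanSpace ℝ (Fin d) → ℝ} {y : EuclideanSpace ℝ (Fin d)} {C : ℝ}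

noncomputable def Mabs (σ : ℝ) : ℝ := ∫ z, |z| ∂(gmeas σ)

lemma Mabs_nonneg (σ : ℝ) : 0 ≤ Mabs σ := integral_nonneg fun z => abs_nonneg z

lemma Jfun_bound (hC : ∀ p, ‖fderiv ℝ h p‖ ≤ C) (t ξ : ℝ) : |Jfun σ h y t ξ| ≤ C := by
  have := norm_integral_le_of_norm_le_const (μ := gmeas σ)
    (f := fun z => Dh h y (Real.sqrt t * ξ + Real.sqrt (1 - t) * z))
    (ae_of_all _ fun z => by
      simpa [Real.norm_eq_abs] using Dh_bound (y := y) hC (Real.sqrt t * ξ + Real.sqrt (1 - t) * z))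
  simpa [Jfun, measure_univ, Real.norm_eq_abs] using this

lemma JZfun_bound (hσ : 0 < σ) (hh : ContDiff ℝ 1 h) (hC : ∀ p, ‖fderiv ℝ h p‖ ≤ C)
    (t ξ : ℝ) : |JZfun σ h y t ξ| ≤ C * Mabs σ := by
  have hC0 : (0:ℝ) ≤ C := le_trans (norm_nonneg _) (hC (0, y))
  calc |JZfun σ h y t ξ|
      ≤ ∫ z, |z| * |Dh h y (Real.sqrt t * ξ + Real.sqrt (1 - t) * z)| ∂(gmeas σ) := by
        simpa [JZfun, Real.norm_eq_abs] using norm_integral_le_integral_norm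
          (μ := gmeas σ) (f := fun z => z * Dh h y (Real.sqrt t * ξ + Real.sqrt (1 - t) * z))
    _ ≤ ∫ z, C * |z| ∂(gmeas σ) := by
        have hint : Integrable
            (fun z => |z| * |Dh h y (Real.sqrt t * ξ + Real.sqrt (1 - t) * z)|) (gmeas σ) := by
          have := (integrable_zDh_comp (y := y) hσ hh hC (Real.sqrt t * ξ)
            (Real.sqrt (1 - t))).abs
          apply this.congr
          filter_upwards with z
          rw [abs_mul]
        apply integral_mono hint ((integrable_abs_gmeas hσ).const_mul C)
        intro z
        calc |z| * |Dh h y (Real.sqrt t * ξ + Real.sqrt (1 - t) * z)| ≤ |z| * C :=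
              mul_le_mul_of_nonneg_left (Dh_bound hC _) (abs_nonneg z)
          _ = C * |z| := by ring
    _ = C * Mabs σ := by rw [integral_const_mul]; rfl

lemma c_sqrt_left {t : ℝ} (ht : t ∈ Ioo (0:ℝ) 1) :
    (2 * Real.sqrt (t * (1 - t)))⁻¹ * Real.sqrt (1 - t) = 1 / (2 * Real.sqrt t) := by
  rw [Real.sqrt_mul ht.1.le]
  have h1 : (0:ℝ) < Real.sqrt t := Real.sqrt_pos.2 ht.1
  have h2 : (0:ℝ) < Real.sqrt (1 - t) := Real.sqrt_pos.2 (by linarith [ht.2])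
  field_simp

lemma c_sqrt_right {t : ℝ} (ht : t ∈ Ioo (0:ℝ) 1) :
    (2 * Real.sqrt (t * (1 - t)))⁻¹ * Real.sqrt t = 1 / (2 * Real.sqrt (1 - t)) := by
  rw [Real.sqrt_mul ht.1.le]
  have h1 : (0:ℝ) < Real.sqrt t := Real.sqrt_pos.2 ht.1
  have h2 : (0:ℝ) < Real.sqrt (1 - t) := Real.sqrt_pos.2 (by linarith [ht.2])
  field_simp

lemma c_sqrt_left_le {t : ℝ} (ht : t ∈ Ioc (0:ℝ) 1) :
    (2 * Real.sqrt (t * (1 - t)))⁻¹ * Real.sqrt (1 - t) ≤ 1 / (2 * Real.sqrt t) := by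
  rcases eq_or_lt_of_le ht.2 with heq | hlt
  · rw [heq]
    simp
  · exact (c_sqrt_left ⟨ht.1, hlt⟩).le

lemma c_sqrt_right_le {t : ℝ} (ht : t ∈ Ioc (0:ℝ) 1) :
    (2 * Real.sqrt (t * (1 - t)))⁻¹ * Real.sqrt t ≤ 1 / (2 * Real.sqrt (1 - t)) := by
  rcases eq_or_lt_of_le ht.2 with heq | hlt
  · rw [heq]
    simp
  · exact (c_sqrt_right ⟨ht.1, hlt⟩).le

lemma intInt_invsqrt : IntervalIntegrable (fun t : ℝ => (Real.sqrt t)⁻¹) volume 0 1 := by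
  have base := intervalIntegral.intervalIntegrable_rpow'
    (a := 0) (b := 1) (r := -(1/2)) (by norm_num)
  rw [intervalIntegrable_iff_integrableOn_Ioc_of_le zero_le_one] at base ⊢
  apply base.congr
  rw [Filter.EventuallyEq, ae_restrict_iff' measurableSet_Ioc]
  filter_upwards with t ht
  rw [Real.rpow_neg ht.1.le, ← Real.sqrt_eq_rpow]

lemma intInt_invsqrt1 : IntervalIntegrable (fun t : ℝ => (Real.sqrt (1 - t))⁻¹) volume 0 1 := by
  have := (intInt_invsqrt.comp_sub_left 1).symm
  simpa using this

lemma measurable_cfun : Measurable (fun t : ℝ => (2 * Real.sqrt (t * (1 - t)))⁻¹) :=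
  ((continuous_const.mul (Real.continuous_sqrt.comp
    (continuous_id.mul (continuous_const.sub continuous_id)))).measurable).inv

lemma aesm_K (hσ : 0 < σ) (hh : ContDiff ℝ 1 h) (hC : ∀ p, ‖fderiv ℝ h p‖ ≤ C) (ξ : ℝ) :
    AEStronglyMeasurable (fun t => (2 * Real.sqrt (t * (1 - t)))⁻¹ * Ifun σ h y t ξ)
      (volume.restrict (Ioc (0:ℝ) 1)) := by
  apply AEStronglyMeasurable.mul
  · exact measurable_cfun.aestronglyMeasurable
  · exact ((contOn_Ifun hσ hh hC ξ).aestronglyMeasurable measurableSet_Icc).mono_measure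
      (Measure.restrict_mono Ioc_subset_Icc_self le_rfl)

lemma aesm_K' (hσ : 0 < σ) (hh : ContDiff ℝ 1 h) (hC : ∀ p, ‖fderiv ℝ h p‖ ≤ C) (ξ : ℝ) :
    AEStronglyMeasurable
      (fun t => (2 * Real.sqrt (t * (1 - t)))⁻¹ * (Real.sqrt t * JZfun σ h y t ξ))
      (volume.restrict (Ioc (0:ℝ) 1)) := by
  apply AEStronglyMeasurable.mul
  · exact measurable_cfun.aestronglyMeasurable
  · apply AEStronglyMeasurable.mul
    · exact Real.continuous_sqrt.aestronglyMeasurable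
    · exact ((contOn_JZfun hσ hh hC ξ).aestronglyMeasurable measurableSet_Icc).mono_measure
        (Measure.restrict_mono Ioc_subset_Icc_self le_rfl)

lemma K_bound (hσ : 0 < σ) (hh : ContDiff ℝ 1 h) (hC : ∀ p, ‖fderiv ℝ h p‖ ≤ C)
    {t : ℝ} (ht : t ∈ Ioc (0:ℝ) 1) (ξ : ℝ) :
    |(2 * Real.sqrt (t * (1 - t)))⁻¹ * Ifun σ h y t ξ| ≤ σ^2 * C / 2 * (Real.sqrt t)⁻¹ := by
  have hC0 : (0:ℝ) ≤ C := le_trans (norm_nonneg _) (hC (0, y))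
  have hcn : (0:ℝ) ≤ (2 * Real.sqrt (t * (1 - t)))⁻¹ := by positivity
  rw [abs_mul, abs_of_nonneg hcn, Ifun_eq_ibp hσ hh hC, abs_mul,
    abs_of_nonneg (sq_nonneg σ), abs_mul, abs_of_nonneg (Real.sqrt_nonneg _)]
  have hJ := Jfun_bound (σ := σ) (y := y) hC t ξ
  have hc := c_sqrt_left_le ht
  have hs : (0:ℝ) < Real.sqrt t := Real.sqrt_pos.2 ht.1
  calc (2 * Real.sqrt (t * (1 - t)))⁻¹ * (σ^2 * (Real.sqrt (1-t) * |Jfun σ h y t ξ|))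
      ≤ (2 * Real.sqrt (t * (1 - t)))⁻¹ * (σ^2 * (Real.sqrt (1-t) * C)) := by
        gcongr
    _ = ((2 * Real.sqrt (t * (1 - t)))⁻¹ * Real.sqrt (1-t)) * (σ^2 * C) := by ring
    _ ≤ (1 / (2 * Real.sqrt t)) * (σ^2 * C) := by
        apply mul_le_mul_of_nonneg_right hc (by positivity)
    _ = σ^2 * C / 2 * (Real.sqrt t)⁻¹ := by
        field_simp

lemma K'_bound (hσ : 0 < σ) (hh : ContDiff ℝ 1 h) (hC : ∀ p, ‖fderiv ℝ h p‖ ≤ C)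
    {t : ℝ} (ht : t ∈ Ioc (0:ℝ) 1) (ξ : ℝ) :
    |(2 * Real.sqrt (t * (1 - t)))⁻¹ * (Real.sqrt t * JZfun σ h y t ξ)|
      ≤ C * Mabs σ / 2 * (Real.sqrt (1 - t))⁻¹ := by
  have hC0 : (0:ℝ) ≤ C := le_trans (norm_nonneg _) (hC (0, y))
  have hcn : (0:ℝ) ≤ (2 * Real.sqrt (t * (1 - t)))⁻¹ := by positivity
  rw [abs_mul, abs_of_nonneg hcn, abs_mul, abs_of_nonneg (Real.sqrt_nonneg t)]
  have hJ := JZfun_bound (y := y) hσ hh hC t ξ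
  have hc := c_sqrt_right_le ht
  calc (2 * Real.sqrt (t * (1 - t)))⁻¹ * (Real.sqrt t * |JZfun σ h y t ξ|)
      ≤ (2 * Real.sqrt (t * (1 - t)))⁻¹ * (Real.sqrt t * (C * Mabs σ)) := by
        gcongr
    _ = ((2 * Real.sqrt (t * (1 - t)))⁻¹ * Real.sqrt t) * (C * Mabs σ) := by ring
    _ ≤ (1 / (2 * Real.sqrt (1 - t))) * (C * Mabs σ) := by
        apply mul_le_mul_of_nonneg_right hc
        exact mul_nonneg hC0 (Mabs_nonneg σ)
    _ = C * Mabs σ / 2 * (Real.sqrt (1 - t))⁻¹ := by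
        field_simp

lemma intK (hσ : 0 < σ) (hh : ContDiff ℝ 1 h) (hC : ∀ p, ‖fderiv ℝ h p‖ ≤ C) (ξ : ℝ) :
    IntervalIntegrable (fun t => (2 * Real.sqrt (t * (1 - t)))⁻¹ * Ifun σ h y t ξ)
      volume 0 1 := by
  rw [intervalIntegrable_iff_integrableOn_Ioc_of_le zero_le_one]
  apply Integrable.mono' (g := fun t => σ^2 * C / 2 * (Real.sqrt t)⁻¹)
  · exact (intervalIntegrable_iff_integrableOn_Ioc_of_le zero_le_one).1
      (intInt_invsqrt.const_mul _)
  · exact aesm_K hσ hh hC ξ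
  · rw [ae_restrict_iff' measurableSet_Ioc]
    filter_upwards with t ht
    exact K_bound hσ hh hC ht ξ

lemma intK' (hσ : 0 < σ) (hh : ContDiff ℝ 1 h) (hC : ∀ p, ‖fderiv ℝ h p‖ ≤ C) (ξ : ℝ) :
    IntervalIntegrable
      (fun t => (2 * Real.sqrt (t * (1 - t)))⁻¹ * (Real.sqrt t * JZfun σ h y t ξ))
      volume 0 1 := by
  rw [intervalIntegrable_iff_integrableOn_Ioc_of_le zero_le_one]
  apply Integrable.mono' (g := fun t => C * Mabs σ / 2 * (Real.sqrt (1 - t))⁻¹)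
  · exact (intervalIntegrable_iff_integrableOn_Ioc_of_le zero_le_one).1
      (intInt_invsqrt1.const_mul _)
  · exact aesm_K' hσ hh hC ξ
  · rw [ae_restrict_iff' measurableSet_Ioc]
    filter_upwards with t ht
    exact K'_bound hσ hh hC ht ξ

end Main4

/-- The Stein solution `f_h` satisfies the Stein equation
`σ² ∂_x f_h(x,y) − x f_h(x,y) = h(x,y) − E[h(Z,y)]`. -/
theorem stmt3 {d : ℕ} (hd : 1 ≤ d) (σ : ℝ) (hσ : 0 < σ)
    (h : ℝ × EuclideanSpace ℝ (Fin d) → ℝ)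
    (hh : ContDiff ℝ 1 h)
    (hhB : ∃ C : ℝ, ∀ p, ‖fderiv ℝ h p‖ ≤ C) :
    ∀ (x : ℝ) (y : EuclideanSpace ℝ (Fin d)),
      σ ^ 2 * deriv (fun t => steinSol σ h t y) x - x * steinSol σ h x y
        = h (x, y) - ∫ z, h (z, y) ∂(gaussianReal 0 ⟨σ ^ 2, sq_nonneg σ⟩) := by
  intro x y
  obtain ⟨C, hC⟩ := hhB
  have hσ2 : (σ:ℝ)^2 ≠ 0 := by positivity
  -- Step 1 : derivative of steinSol at x
  have main := intervalIntegral.hasDerivAt_integral_of_dominated_loc_of_deriv_le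
    (μ := volume) (a := 0) (b := 1) (x₀ := x)
    (F := fun ξ t => (2 * Real.sqrt (t * (1 - t)))⁻¹ * Ifun σ h y t ξ)
    (F' := fun ξ t => (2 * Real.sqrt (t * (1 - t)))⁻¹ * (Real.sqrt t * JZfun σ h y t ξ))
    (bound := fun t => C * Mabs σ / 2 * (Real.sqrt (1 - t))⁻¹)
    (Metric.ball_mem_nhds _ one_pos)
    (Filter.Eventually.of_forall fun ξ => by
      rw [Set.uIoc_of_le (zero_le_one (α := ℝ))]
      exact aesm_K hσ hh hC ξ)
    (intK hσ hh hC x)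
    (by rw [Set.uIoc_of_le (zero_le_one (α := ℝ))]
        exact aesm_K' hσ hh hC x)
    (by filter_upwards with t ht ξ _
        rw [Set.uIoc_of_le (zero_le_one (α := ℝ))] at ht
        rw [Real.norm_eq_abs]
        exact K'_bound hσ hh hC ht ξ)
    (intInt_invsqrt1.const_mul _)
    (by filter_upwards with t _ ξ _
        exact (hasDerivAt_Ifun hσ hh hC t ξ).const_mul ((2 * Real.sqrt (t * (1 - t)))⁻¹))
  have hfun : (fun ξ => steinSol σ h ξ y)
      = fun ξ => -(1/σ^2) * ∫ t in (0:ℝ)..1,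
          (2 * Real.sqrt (t * (1 - t)))⁻¹ * Ifun σ h y t ξ :=
    funext fun ξ => steinSol_eq σ h y ξ
  have hderiv : HasDerivAt (fun ξ => steinSol σ h ξ y)
      (-(1/σ^2) * ∫ t in (0:ℝ)..1,
        (2 * Real.sqrt (t * (1 - t)))⁻¹ * (Real.sqrt t * JZfun σ h y t x)) x := by
    rw [hfun]
    exact main.2.const_mul (-(1/σ^2))
  -- Step 2 : FTC for Gfun
  set g' : ℝ → ℝ := fun t =>
    x/σ^2 * ((2 * Real.sqrt (t * (1 - t)))⁻¹ * Ifun σ h y t x)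
      - (2 * Real.sqrt (t * (1 - t)))⁻¹ * (Real.sqrt t * JZfun σ h y t x) with hg'def
  have hG : ∀ t ∈ Ioo (0:ℝ) 1,
      HasDerivWithinAt (fun t => Gfun σ h y x t) (g' t) (Ioi t) t := by
    intro t ht
    have hbase := hasDerivAt_Gfun (y := y) hσ hh hC x ht
    have heq : g' t = x / (2 * Real.sqrt t) * Jfun σ h y t x
        - 1 / (2 * Real.sqrt (1 - t)) * JZfun σ h y t x := by
      simp only [hg'def]
      have h1 : x/σ^2 * ((2 * Real.sqrt (t * (1 - t)))⁻¹ * Ifun σ h y t x)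
          = x / (2 * Real.sqrt t) * Jfun σ h y t x := by
        rw [Ifun_eq_ibp (y := y) hσ hh hC]
        calc x/σ^2 * ((2 * Real.sqrt (t * (1 - t)))⁻¹
              * (σ^2 * (Real.sqrt (1-t) * Jfun σ h y t x)))
            = ((2 * Real.sqrt (t * (1 - t)))⁻¹ * Real.sqrt (1-t))
              * (x * Jfun σ h y t x) * (σ^2/σ^2) := by ring
          _ = (1/(2 * Real.sqrt t)) * (x * Jfun σ h y t x) * 1 := by
              rw [c_sqrt_left ht, div_self hσ2]
          _ = x / (2 * Real.sqrt t) * Jfun σ h y t x := by ring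
      have h2 : (2 * Real.sqrt (t * (1 - t)))⁻¹ * (Real.sqrt t * JZfun σ h y t x)
          = 1 / (2 * Real.sqrt (1 - t)) * JZfun σ h y t x := by
        calc (2 * Real.sqrt (t * (1 - t)))⁻¹ * (Real.sqrt t * JZfun σ h y t x)
            = ((2 * Real.sqrt (t * (1 - t)))⁻¹ * Real.sqrt t) * JZfun σ h y t x := by ring
          _ = 1 / (2 * Real.sqrt (1 - t)) * JZfun σ h y t x := by rw [c_sqrt_right ht]
      rw [h1, h2]
    rw [heq]
    exact hbase.hasDerivWithinAt
  have hint_g' : IntervalIntegrable g' volume 0 1 := by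
    rw [hg'def]
    exact ((intK hσ hh hC x).const_mul (x/σ^2)).sub (intK' hσ hh hC x)
  have hFTC := intervalIntegral.integral_eq_sub_of_hasDeriv_right_of_le zero_le_one
    (contOn_Gfun hσ hh hC x) hG hint_g'
  -- Step 3 : endpoints
  have hG1 : Gfun σ h y x 1 = h (x, y) := by
    simp [Gfun, Real.sqrt_one, Real.sqrt_zero, measure_univ]
  have hG0 : Gfun σ h y x 0 = ∫ z, h (z, y) ∂(gaussianReal 0 ⟨σ^2, sq_nonneg σ⟩) := by
    simp [Gfun, Real.sqrt_one, Real.sqrt_zero, gmeas_eq]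
  -- Step 4 : assembly
  rw [hderiv.deriv, steinSol_eq σ h y x]
  have hsplit : ∫ t in (0:ℝ)..1, g' t
      = x/σ^2 * (∫ t in (0:ℝ)..1, (2 * Real.sqrt (t * (1 - t)))⁻¹ * Ifun σ h y t x)
        - ∫ t in (0:ℝ)..1,
            (2 * Real.sqrt (t * (1 - t)))⁻¹ * (Real.sqrt t * JZfun σ h y t x) := by
    rw [hg'def, intervalIntegral.integral_sub ((intK hσ hh hC x).const_mul (x/σ^2))
      (intK' hσ hh hC x), intervalIntegral.integral_const_mul]
  have hfinal : σ ^ 2 * (-(1/σ^2) * ∫ t in (0:ℝ)..1,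
        (2 * Real.sqrt (t * (1 - t)))⁻¹ * (Real.sqrt t * JZfun σ h y t x))
      - x * (-(1/σ^2) * ∫ t in (0:ℝ)..1,
          (2 * Real.sqrt (t * (1 - t)))⁻¹ * Ifun σ h y t x)
      = ∫ t in (0:ℝ)..1, g' t := by
    rw [hsplit]
    field_simp
    ring
  rw [hfinal, hFTC, hG1, hG0]
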